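/- Define the Entringer numbers E(n,k) for 0 ≤ k ≤ n by the recurrence E(0,0) = 1, E(n,0) = 0 for n ≥ 1, and E(n,k) = E(n,k−1) + E(n−1,n−k) for n ≥ 1 and 1 ≤ k ≤ n. Then for all n ≥ 1 and 0 ≤ k ≤ n, E(n,k) equals the number of down-up alternating permutations σ of {1,…,n+1} (i.e. σ₁>σ₂<σ₃>σ₄<⋯) whose first entry is σ₁ = k+1. -/

import Mathlib

/-- A permutation `σ` of `{1,…,m}` (modeled on `Fin m`, positions 0-indexed) is
down-up alternating if `σ₁ > σ₂ < σ₃ > σ₄ < ⋯` (1-indexed). -/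
def IsDownUp {m : ℕ} (σ : Equiv.Perm (Fin m)) : Prop :=
  ∀ (i : ℕ) (h : i + 1 < m),
    if i % 2 = 0 then σ ⟨i + 1, h⟩ < σ ⟨i, Nat.lt_of_succ_lt h⟩
    else σ ⟨i, Nat.lt_of_succ_lt h⟩ < σ ⟨i + 1, h⟩

def gk (n k v : ℕ) : ℕ := if v < k then n - v else n + 1 - v
def gki (n k w : ℕ) : ℕ := if w < n + 1 - k then n + 1 - w else n - w

lemma gk_le (n k v : ℕ) (hk : 1 ≤ k) (hv : v ≤ n + 1) : gk n k v ≤ n := by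
  unfold gk; split_ifs <;> omega

lemma gk_lt_iff (n k v w : ℕ) (hkn : k ≤ n + 1) (hv : v ≤ n + 1) (hw : w ≤ n + 1)
    (hv' : v ≠ k) (hw' : w ≠ k) : gk n k v < gk n k w ↔ w < v := by
  unfold gk; split_ifs <;> omega

lemma gk_inj (n k v w : ℕ) (hkn : k ≤ n + 1) (hv : v ≤ n + 1) (hw : w ≤ n + 1)
    (hv' : v ≠ k) (hw' : w ≠ k) (h : gk n k v = gk n k w) : v = w := by
  unfold gk at h; split_ifs at h <;> omega

lemma gki_le (n k w : ℕ) (hk : 1 ≤ k) (hkn : k ≤ n + 1) (hw : w ≤ n) :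
    gki n k w ≤ n + 1 := by unfold gki; split_ifs <;> omega

lemma gki_lt_iff (n k v w : ℕ) (hv : v ≤ n) (hw : w ≤ n) :
    gki n k v < gki n k w ↔ w < v := by
  unfold gki; split_ifs <;> omega

lemma gki_inj (n k v w : ℕ) (hv : v ≤ n) (hw : w ≤ n) (h : gki n k v = gki n k w) :
    v = w := by unfold gki at h; split_ifs at h <;> omega

lemma gki_ne (n k w : ℕ) (hk : 1 ≤ k) (hkn : k ≤ n + 1) (hw : w ≤ n) : gki n k w ≠ k := by
  unfold gki; split_ifs <;> omega

lemma gki_gk (n k v : ℕ) (hk : 1 ≤ k) (hkn : k ≤ n + 1) (hv : v ≤ n + 1) (hv' : v ≠ k) :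
    gki n k (gk n k v) = v := by unfold gki gk; split_ifs <;> omega

lemma gk_gki (n k w : ℕ) (hk : 1 ≤ k) (hkn : k ≤ n + 1) (hw : w ≤ n) :
    gk n k (gki n k w) = w := by unfold gki gk; split_ifs <;> omega

lemma gk_km1 (n k : ℕ) (hk : 1 ≤ k) : gk n k (k - 1) = n + 1 - k := by
  unfold gk; split_ifs <;> omega

lemma gki_top (n k : ℕ) (hk : 1 ≤ k) (hkn : k ≤ n + 1) : gki n k (n + 1 - k) = k - 1 := by
  unfold gki; split_ifs <;> omega

/-- forward function for the deletion bijection -/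
def cf (n k : ℕ) (σ : Equiv.Perm (Fin (n + 2))) : Fin (n + 1) → Fin (n + 1) :=
  fun i => ⟨min n (gk n k ((σ ⟨(i : ℕ) + 1, by have := i.isLt; omega⟩ : Fin (n + 2)) : ℕ)),
    by have := Nat.min_le_left n (gk n k ((σ ⟨(i : ℕ) + 1, by have := i.isLt; omega⟩ : Fin (n + 2)) : ℕ)); omega⟩

/-- backward function -/
def cb (n k : ℕ) (τ : Equiv.Perm (Fin (n + 1))) : Fin (n + 2) → Fin (n + 2) :=
  fun j => if h : (j : ℕ) = 0 then ⟨min (n + 1) k, by have := Nat.min_le_left (n+1) k; omega⟩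
    else ⟨min (n + 1) (gki n k ((τ ⟨(j : ℕ) - 1, by have := j.isLt; omega⟩ : Fin (n + 1)) : ℕ)),
      by have := Nat.min_le_left (n+1) (gki n k ((τ ⟨(j : ℕ) - 1, by have := j.isLt; omega⟩ : Fin (n + 1)) : ℕ)); omega⟩

lemma cf_val (n k : ℕ) (hk1 : 1 ≤ k) (σ : Equiv.Perm (Fin (n + 2))) (i : ℕ) (hi : i < n + 1) :
    (cf n k σ ⟨i, hi⟩ : ℕ) = gk n k ((σ ⟨i + 1, by omega⟩ : Fin (n + 2)) : ℕ) := by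
  simp only [cf]
  exact Nat.min_eq_right (gk_le n k _ hk1 (by have := (σ ⟨i + 1, by omega⟩).isLt; omega))

lemma cb_val0 (n k : ℕ) (hkn : k ≤ n + 1) (τ : Equiv.Perm (Fin (n + 1))) :
    (cb n k τ ⟨0, by omega⟩ : ℕ) = k := by
  simp only [cb, dif_pos]
  omega

lemma cb_valS (n k : ℕ) (hk1 : 1 ≤ k) (hkn : k ≤ n + 1) (τ : Equiv.Perm (Fin (n + 1)))
    (j : ℕ) (hj : j + 1 < n + 2) :
    (cb n k τ ⟨j + 1, hj⟩ : ℕ) = gki n k ((τ ⟨j, by omega⟩ : Fin (n + 1)) : ℕ) := by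
  simp only [cb, dif_neg (Nat.succ_ne_zero j)]
  exact Nat.min_eq_right (gki_le n k _ hk1 hkn (by have := (τ ⟨j, by omega⟩).isLt; omega))

lemma cf_inj (n k : ℕ) (hk1 : 1 ≤ k) (hkn : k ≤ n + 1) (σ : Equiv.Perm (Fin (n + 2)))
    (h0 : σ ⟨0, by omega⟩ = ⟨k, by omega⟩) : Function.Injective (cf n k σ) := by
  intro i j hij
  have hne : ∀ (m : ℕ) (hm : m < n + 2), m ≠ 0 → ((σ ⟨m, hm⟩ : Fin (n + 2)) : ℕ) ≠ k := by
    intro m hm hm0 hc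
    have : σ ⟨m, hm⟩ = σ ⟨0, by omega⟩ := by rw [h0]; exact Fin.ext hc
    have := σ.injective this
    simp [Fin.ext_iff] at this; omega
  rcases i with ⟨i, hi⟩; rcases j with ⟨j, hj⟩
  have h1 := cf_val n k hk1 σ i hi
  have h2 := cf_val n k hk1 σ j hj
  have hv : ((σ ⟨i + 1, by omega⟩ : Fin (n + 2)) : ℕ) = ((σ ⟨j + 1, by omega⟩ : Fin (n + 2)) : ℕ) := by
    apply gk_inj n k _ _ hkn (by have := (σ ⟨i+1, by omega⟩).isLt; omega)
      (by have := (σ ⟨j+1, by omega⟩).isLt; omega) (hne _ _ (by omega)) (hne _ _ (by omega))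
    rw [← h1, ← h2, hij]
  have := σ.injective (Fin.ext hv)
  simp only [Fin.mk.injEq] at this
  simp only [Fin.mk.injEq]; omega

lemma cb_inj (n k : ℕ) (hk1 : 1 ≤ k) (hkn : k ≤ n + 1) (τ : Equiv.Perm (Fin (n + 1))) :
    Function.Injective (cb n k τ) := by
  intro j1 j2 h
  rcases j1 with ⟨j1, hj1⟩; rcases j2 with ⟨j2, hj2⟩
  have hval : (cb n k τ ⟨j1, hj1⟩ : ℕ) = (cb n k τ ⟨j2, hj2⟩ : ℕ) := by rw [h]
  rcases Nat.eq_zero_or_pos j1 with h1 | h1 <;> rcases Nat.eq_zero_or_pos j2 with h2 | h2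
  · simp only [Fin.mk.injEq]; omega
  · subst h1
    obtain ⟨m, rfl⟩ : ∃ m, j2 = m + 1 := ⟨j2 - 1, by omega⟩
    rw [cb_val0 n k hkn, cb_valS n k hk1 hkn] at hval
    exact absurd hval.symm (gki_ne n k _ hk1 hkn (by have := (τ ⟨m, by omega⟩).isLt; omega))
  · subst h2
    obtain ⟨m, rfl⟩ : ∃ m, j1 = m + 1 := ⟨j1 - 1, by omega⟩
    rw [cb_val0 n k hkn, cb_valS n k hk1 hkn] at hval
    exact absurd hval (gki_ne n k _ hk1 hkn (by have := (τ ⟨m, by omega⟩).isLt; omega))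
  · obtain ⟨m1, rfl⟩ : ∃ m, j1 = m + 1 := ⟨j1 - 1, by omega⟩
    obtain ⟨m2, rfl⟩ : ∃ m, j2 = m + 1 := ⟨j2 - 1, by omega⟩
    rw [cb_valS n k hk1 hkn, cb_valS n k hk1 hkn] at hval
    have := τ.injective (Fin.ext (gki_inj n k _ _
      (by have := (τ ⟨m1, by omega⟩).isLt; omega)
      (by have := (τ ⟨m2, by omega⟩).isLt; omega) hval))
    simp only [Fin.mk.injEq] at this
    simp only [Fin.mk.injEq]; omega

lemma sigma_ne_k (n k : ℕ) (hkn : k ≤ n + 1) (σ : Equiv.Perm (Fin (n + 2)))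
    (h0 : σ ⟨0, by omega⟩ = ⟨k, by omega⟩) :
    ∀ (m : ℕ) (hm : m < n + 2), m ≠ 0 → ((σ ⟨m, hm⟩ : Fin (n + 2)) : ℕ) ≠ k := by
  intro m hm hm0 hc
  have : σ ⟨m, hm⟩ = σ ⟨0, by omega⟩ := by rw [h0]; exact Fin.ext hc
  have := σ.injective this
  simp [Fin.ext_iff] at this; omega

lemma cf_DU (n k : ℕ) (hk1 : 1 ≤ k) (hkn : k ≤ n + 1) (σ : Equiv.Perm (Fin (n + 2)))
    (hDU : IsDownUp σ) (h0 : σ ⟨0, by omega⟩ = ⟨k, by omega⟩) :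
    ∀ (i : ℕ) (h : i + 1 < n + 1),
      if i % 2 = 0 then cf n k σ ⟨i + 1, h⟩ < cf n k σ ⟨i, Nat.lt_of_succ_lt h⟩
      else cf n k σ ⟨i, Nat.lt_of_succ_lt h⟩ < cf n k σ ⟨i + 1, h⟩ := by
  intro i h
  have hne := sigma_ne_k n k hkn σ h0
  have e1 := cf_val n k hk1 σ i (Nat.lt_of_succ_lt h)
  have e2 := cf_val n k hk1 σ (i + 1) h
  have key := hDU (i + 1) (by omega)
  have ne1 : ((σ ⟨i + 1, by omega⟩ : Fin (n + 2)) : ℕ) ≠ k := hne _ _ (by omega)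
  have ne2 : ((σ ⟨i + 1 + 1, by omega⟩ : Fin (n + 2)) : ℕ) ≠ k := hne _ _ (by omega)
  rcases Nat.even_or_odd i with he | ho
  · have hi2 : i % 2 = 0 := Nat.even_iff.mp he
    rw [if_pos hi2]
    rw [if_neg (by omega)] at key
    -- key : σ ⟨i+1,_⟩ < σ ⟨i+2,_⟩ ; goal : cf ⟨i+1⟩ < cf ⟨i⟩
    have : (cf n k σ ⟨i + 1, h⟩ : ℕ) < (cf n k σ ⟨i, Nat.lt_of_succ_lt h⟩ : ℕ) := by
      rw [e1, e2, gk_lt_iff n k _ _ hkn (Fin.is_le _) (Fin.is_le _) ne2 ne1]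
      exact key
    exact this
  · have hi2 : ¬ (i % 2 = 0) := by have := Nat.odd_iff.mp ho; omega
    rw [if_neg hi2]
    rw [if_pos (by have := Nat.odd_iff.mp ho; omega)] at key
    -- key : σ ⟨i+2,_⟩ < σ ⟨i+1,_⟩ ; goal : cf ⟨i⟩ < cf ⟨i+1⟩
    have : (cf n k σ ⟨i, Nat.lt_of_succ_lt h⟩ : ℕ) < (cf n k σ ⟨i + 1, h⟩ : ℕ) := by
      rw [e1, e2, gk_lt_iff n k _ _ hkn (Fin.is_le _) (Fin.is_le _) ne1 ne2]
      exact key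
    exact this

lemma cf_first (n k : ℕ) (hk1 : 1 ≤ k) (hkn : k ≤ n + 1) (σ : Equiv.Perm (Fin (n + 2)))
    (h1 : σ ⟨1, by omega⟩ = ⟨k - 1, by omega⟩) :
    cf n k σ ⟨0, by omega⟩ = ⟨n + 1 - k, by omega⟩ := by
  apply Fin.ext
  rw [cf_val n k hk1 σ 0 (by omega)]
  have : ((σ ⟨0 + 1, by omega⟩ : Fin (n + 2)) : ℕ) = k - 1 := by rw [h1]
  rw [this, gk_km1 n k hk1]

lemma cb_DU (n k : ℕ) (hk1 : 1 ≤ k) (hkn : k ≤ n + 1) (τ : Equiv.Perm (Fin (n + 1)))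
    (hDU : IsDownUp τ) (h0 : τ ⟨0, by omega⟩ = ⟨n + 1 - k, by omega⟩) :
    ∀ (i : ℕ) (h : i + 1 < n + 2),
      if i % 2 = 0 then cb n k τ ⟨i + 1, h⟩ < cb n k τ ⟨i, Nat.lt_of_succ_lt h⟩
      else cb n k τ ⟨i, Nat.lt_of_succ_lt h⟩ < cb n k τ ⟨i + 1, h⟩ := by
  intro i h
  rcases i with _ | m
  · rw [if_pos rfl]
    have lhs := cb_valS n k hk1 hkn τ 0 h
    have rhs := cb_val0 n k hkn τ
    have : ((τ ⟨0, by omega⟩ : Fin (n + 1)) : ℕ) = n + 1 - k := by rw [h0]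
    have goal : (cb n k τ ⟨0 + 1, h⟩ : ℕ) < (cb n k τ ⟨0, Nat.lt_of_succ_lt h⟩ : ℕ) := by
      rw [lhs, rhs, this, gki_top n k hk1 hkn]; omega
    exact goal
  · have e1 := cb_valS n k hk1 hkn τ m (Nat.lt_of_succ_lt h)
    have e2 := cb_valS n k hk1 hkn τ (m + 1) h
    have key := hDU m (by omega)
    rcases Nat.even_or_odd m with he | ho
    · have hm2 : m % 2 = 0 := Nat.even_iff.mp he
      rw [if_neg (by omega)]
      rw [if_pos hm2] at key
      -- key : τ ⟨m+1⟩ < τ ⟨m⟩ ; goal : cb ⟨m+1⟩ < cb ⟨m+2⟩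
      have : (cb n k τ ⟨m + 1, Nat.lt_of_succ_lt h⟩ : ℕ) < (cb n k τ ⟨m + 1 + 1, h⟩ : ℕ) := by
        rw [e1, e2, gki_lt_iff n k _ _ (Fin.is_le _) (Fin.is_le _)]
        exact key
      exact this
    · have hm2 : m % 2 = 1 := Nat.odd_iff.mp ho
      rw [if_pos (by omega)]
      rw [if_neg (by omega)] at key
      -- key : τ ⟨m⟩ < τ ⟨m+1⟩ ; goal : cb ⟨m+2⟩ < cb ⟨m+1⟩
      have : (cb n k τ ⟨m + 1 + 1, h⟩ : ℕ) < (cb n k τ ⟨m + 1, Nat.lt_of_succ_lt h⟩ : ℕ) := by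
        rw [e1, e2, gki_lt_iff n k _ _ (Fin.is_le _) (Fin.is_le _)]
        exact key
      exact this

lemma cb_first0 (n k : ℕ) (hkn : k ≤ n + 1) (τ : Equiv.Perm (Fin (n + 1))) :
    cb n k τ ⟨0, by omega⟩ = ⟨k, by omega⟩ :=
  Fin.ext (cb_val0 n k hkn τ)

lemma cb_first1 (n k : ℕ) (hk1 : 1 ≤ k) (hkn : k ≤ n + 1) (τ : Equiv.Perm (Fin (n + 1)))
    (h0 : τ ⟨0, by omega⟩ = ⟨n + 1 - k, by omega⟩) :
    cb n k τ ⟨1, by omega⟩ = ⟨k - 1, by omega⟩ := by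
  apply Fin.ext
  rw [cb_valS n k hk1 hkn τ 0 (by omega)]
  have : ((τ ⟨0, by omega⟩ : Fin (n + 1)) : ℕ) = n + 1 - k := by rw [h0]
  rw [this, gki_top n k hk1 hkn]

lemma cb_cf (n k : ℕ) (hk1 : 1 ≤ k) (hkn : k ≤ n + 1) (σ : Equiv.Perm (Fin (n + 2)))
    (h0 : σ ⟨0, by omega⟩ = ⟨k, by omega⟩) (τ : Equiv.Perm (Fin (n + 1)))
    (hτ : ∀ i : Fin (n + 1), τ i = cf n k σ i) :
    ∀ j : Fin (n + 2), cb n k τ j = σ j := by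
  intro ⟨j, hj⟩
  apply Fin.ext
  rcases j with _ | m
  · rw [cb_val0 n k hkn τ]
    have : ((σ ⟨0, by omega⟩ : Fin (n + 2)) : ℕ) = k := by rw [h0]
    rw [this]
  · rw [cb_valS n k hk1 hkn τ m hj, hτ, cf_val n k hk1 σ m (by omega),
      gki_gk n k _ hk1 hkn (Fin.is_le _) (sigma_ne_k n k hkn σ h0 _ _ (by omega))]

lemma cf_cb (n k : ℕ) (hk1 : 1 ≤ k) (hkn : k ≤ n + 1) (τ : Equiv.Perm (Fin (n + 1)))
    (s : Equiv.Perm (Fin (n + 2))) (hs : ∀ j : Fin (n + 2), s j = cb n k τ j) :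
    ∀ i : Fin (n + 1), cf n k s i = τ i := by
  intro ⟨i, hi⟩
  apply Fin.ext
  rw [cf_val n k hk1 s i hi, hs, cb_valS n k hk1 hkn τ i (by omega),
    gk_gki n k _ hk1 hkn (Fin.is_le _)]

lemma lemC (n k : ℕ) (hk1 : 1 ≤ k) (hkn : k ≤ n + 1) :
    Nat.card {σ : Equiv.Perm (Fin (n + 2)) //
        (IsDownUp σ ∧ σ ⟨0, by omega⟩ = ⟨k, by omega⟩) ∧ σ ⟨1, by omega⟩ = ⟨k - 1, by omega⟩} =
    Nat.card {τ : Equiv.Perm (Fin (n + 1)) //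
        IsDownUp τ ∧ τ ⟨0, by omega⟩ = ⟨n + 1 - k, by omega⟩} := by
  refine Nat.card_eq_of_bijective
    (fun σp => ⟨Equiv.ofBijective (cf n k σp.1)
        ((Finite.injective_iff_bijective).mp (cf_inj n k hk1 hkn σp.1 σp.2.1.2)),
      cf_DU n k hk1 hkn σp.1 σp.2.1.1 σp.2.1.2,
      cf_first n k hk1 hkn σp.1 σp.2.2⟩) ?_
  rw [Function.bijective_iff_has_inverse]
  refine ⟨fun τp => ⟨Equiv.ofBijective (cb n k τp.1)
      ((Finite.injective_iff_bijective).mp (cb_inj n k hk1 hkn τp.1)),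
      ⟨cb_DU n k hk1 hkn τp.1 τp.2.1 τp.2.2, cb_first0 n k hkn τp.1⟩,
      cb_first1 n k hk1 hkn τp.1 τp.2.2⟩, ?_, ?_⟩
  · rintro ⟨σ, hσ⟩
    apply Subtype.ext
    apply Equiv.ext
    intro j
    exact cb_cf n k hk1 hkn σ hσ.1.2 _ (fun i => rfl) j
  · rintro ⟨τ, hτ⟩
    apply Subtype.ext
    apply Equiv.ext
    intro i
    exact cf_cb n k hk1 hkn τ _ (fun j => rfl) i

lemma swap_compare {m : ℕ} (a b x y : Fin m) (hab : (b : ℕ) = a + 1)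
    (h1 : ¬(x = a ∧ y = b)) (h2 : ¬(x = b ∧ y = a)) :
    (Equiv.swap a b x < Equiv.swap a b y ↔ x < y) := by
  rw [Equiv.swap_apply_def, Equiv.swap_apply_def]
  split_ifs <;> simp only [Fin.ext_iff, Fin.lt_def] at * <;> omega

lemma lemB (n k : ℕ) (hk1 : 1 ≤ k) (hkn : k ≤ n + 1) :
    Nat.card {σ : Equiv.Perm (Fin (n + 2)) //
        (IsDownUp σ ∧ σ ⟨0, by omega⟩ = ⟨k, by omega⟩) ∧ σ ⟨1, by omega⟩ ≠ ⟨k - 1, by omega⟩} =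
    Nat.card {σ : Equiv.Perm (Fin (n + 2)) //
        IsDownUp σ ∧ σ ⟨0, by omega⟩ = ⟨k - 1, by omega⟩} := by
  set a : Fin (n + 2) := ⟨k - 1, by omega⟩ with ha
  set b : Fin (n + 2) := ⟨k, by omega⟩ with hb
  have hab : (b : ℕ) = a + 1 := by simp [ha, hb]; omega
  -- forward map
  refine Nat.card_eq_of_bijective
    (fun σp => ⟨σp.1.trans (Equiv.swap a b), ?_, ?_⟩) ?_
  · -- IsDownUp
    obtain ⟨σ, ⟨hDU, h0⟩, h1⟩ := σp
    intro i h
    have key := hDU i h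
    have hne0 : ∀ (j : ℕ) (hj : j < n + 2), j ≠ 0 → σ ⟨j, hj⟩ ≠ b := by
      intro j hj hj0 hc
      rw [← h0] at hc
      have := σ.injective hc
      simp [Fin.ext_iff] at this; omega
    have c1 : ¬(σ ⟨i + 1, h⟩ = a ∧ σ ⟨i, Nat.lt_of_succ_lt h⟩ = b) := by
      rintro ⟨e1, e2⟩
      rcases Nat.eq_zero_or_pos i with hi | hi
      · apply h1; subst hi; exact e1
      · exact hne0 i _ (by omega) e2
    have c2 : ¬(σ ⟨i + 1, h⟩ = b ∧ σ ⟨i, Nat.lt_of_succ_lt h⟩ = a) := by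
      rintro ⟨e1, e2⟩; exact hne0 (i+1) _ (by omega) e1
    simp only [Equiv.trans_apply]
    split_ifs with hp
    · rw [swap_compare a b _ _ hab c1 c2]
      simpa [hp] using key
    · rw [swap_compare a b _ _ hab (by tauto) (by tauto)]
      simpa [hp] using key
  · obtain ⟨σ, ⟨hDU, h0⟩, h1⟩ := σp
    simp only [Equiv.trans_apply, h0]
    exact Equiv.swap_apply_right a b
  · -- bijectivity via explicit inverse
    rw [Function.bijective_iff_has_inverse]
    refine ⟨fun τp => ⟨τp.1.trans (Equiv.swap a b), ⟨?_, ?_⟩, ?_⟩, ?_, ?_⟩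
    · -- IsDownUp of inverse image
      obtain ⟨τ, hDU, h0⟩ := τp
      intro i h
      have key := hDU i h
      have h1lt : τ ⟨1, by omega⟩ < a := by
        have hh := hDU 0 (by omega)
        rw [if_pos rfl] at hh
        exact lt_of_lt_of_eq hh h0
      have hnea : ∀ (j : ℕ) (hj : j < n + 2), j ≠ 0 → τ ⟨j, hj⟩ ≠ a := by
        intro j hj hj0 hc
        rw [← h0] at hc
        have := τ.injective hc
        simp [Fin.ext_iff] at this; omega
      have hneb : ∀ (j : ℕ) (hj : j < n + 2), j ≠ 1 → ¬ (τ ⟨j, hj⟩ = b ∧ j = 0) → True := by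
        intros; trivial
      have c1 : ¬(τ ⟨i + 1, h⟩ = a ∧ τ ⟨i, Nat.lt_of_succ_lt h⟩ = b) := by
        rintro ⟨e1, e2⟩; exact hnea (i+1) _ (by omega) e1
      have c2 : ¬(τ ⟨i + 1, h⟩ = b ∧ τ ⟨i, Nat.lt_of_succ_lt h⟩ = a) := by
        rintro ⟨e1, e2⟩
        rcases Nat.eq_zero_or_pos i with hi | hi
        · subst hi
          have : τ ⟨1, by omega⟩ = b := e1
          rw [this] at h1lt
          rw [Fin.lt_def, hab] at h1lt; omega
        · exact hnea i _ (by omega) e2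
      simp only [Equiv.trans_apply]
      split_ifs with hp
      · rw [swap_compare a b _ _ hab c1 c2]
        simpa [hp] using key
      · rw [swap_compare a b _ _ hab (by tauto) (by tauto)]
        simpa [hp] using key
    · obtain ⟨τ, hDU, h0⟩ := τp
      simp only [Equiv.trans_apply, h0]
      exact Equiv.swap_apply_left a b
    · -- σ 1 ≠ a
      obtain ⟨τ, hDU, h0⟩ := τp
      have h1lt : τ ⟨1, by omega⟩ < a := by
        have hh := hDU 0 (by omega)
        rw [if_pos rfl] at hh
        exact lt_of_lt_of_eq hh h0
      simp only [Equiv.trans_apply]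
      have hna : τ ⟨1, by omega⟩ ≠ a := ne_of_lt h1lt
      have hnb : τ ⟨1, by omega⟩ ≠ b := by
        intro hc; rw [hc] at h1lt
        simp [Fin.lt_def, ha, hb] at h1lt; omega
      rw [Equiv.swap_apply_of_ne_of_ne hna hnb]
      exact hna
    · intro σp
      apply Subtype.ext
      apply Equiv.ext
      intro j
      simp [Equiv.swap_apply_self]
    · intro τp
      apply Subtype.ext
      apply Equiv.ext
      intro j
      simp [Equiv.swap_apply_self]

lemma card_split {α : Type*} [Fintype α] (p q : α → Prop) :
    Nat.card {x // p x} = Nat.card {x // p x ∧ q x} + Nat.card {x // p x ∧ ¬ q x} := by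
  classical
  simp only [Nat.card_eq_fintype_card, Fintype.card_subtype]
  rw [← Finset.filter_filter, ← Finset.filter_filter]
  exact (Finset.card_filter_add_card_filter_not (p := fun x => q x)).symm

lemma lemA (n : ℕ) :
    Nat.card {σ : Equiv.Perm (Fin (n + 2)) //
      IsDownUp σ ∧ σ ⟨0, by omega⟩ = ⟨0, by omega⟩} = 0 := by
  have : IsEmpty {σ : Equiv.Perm (Fin (n + 2)) //
      IsDownUp σ ∧ σ ⟨0, by omega⟩ = ⟨0, by omega⟩} := by
    constructor
    rintro ⟨σ, hDU, h0⟩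
    have h := hDU 0 (by omega)
    rw [if_pos rfl] at h
    have := lt_of_lt_of_eq h h0
    simp [Fin.lt_def] at this
  exact Nat.card_of_isEmpty

lemma card_one :
    Nat.card {τ : Equiv.Perm (Fin 1) //
      IsDownUp τ ∧ τ ⟨0, by omega⟩ = ⟨0, by omega⟩} = 1 := by
  have h : ∀ τ : Equiv.Perm (Fin 1), IsDownUp τ ∧ τ ⟨0, by omega⟩ = ⟨0, by omega⟩ := by
    intro τ
    refine ⟨fun i hi => absurd hi (by omega), Subsingleton.elim _ _⟩
  rw [Nat.card_congr (Equiv.subtypeUnivEquiv h)]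
  simp [Nat.card_eq_fintype_card]


lemma Drec (n k r : ℕ) (hk1 : 1 ≤ k) (hkn : k ≤ n + 1) (hr : r = n + 1 - k) :
    Nat.card {σ : Equiv.Perm (Fin (n + 2)) //
        IsDownUp σ ∧ σ ⟨0, by omega⟩ = ⟨k, by omega⟩} =
    Nat.card {σ : Equiv.Perm (Fin (n + 2)) //
        IsDownUp σ ∧ σ ⟨0, by omega⟩ = ⟨k - 1, by omega⟩} +
    Nat.card {τ : Equiv.Perm (Fin (n + 1)) //
        IsDownUp τ ∧ τ ⟨0, by omega⟩ = ⟨r, by omega⟩} := by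
  subst hr
  rw [card_split (fun σ : Equiv.Perm (Fin (n + 2)) =>
      IsDownUp σ ∧ σ ⟨0, by omega⟩ = ⟨k, by omega⟩)
    (fun σ => σ ⟨1, by omega⟩ = ⟨k - 1, by omega⟩)]
  rw [lemC n k hk1 hkn, lemB n k hk1 hkn]
  omega

lemma main_aux (E : ℕ → ℕ → ℕ)
    (h0 : E 0 0 = 1)
    (hb : ∀ n : ℕ, 1 ≤ n → E n 0 = 0)
    (hrec : ∀ n k : ℕ, 1 ≤ n → 1 ≤ k → k ≤ n → E n k = E n (k - 1) + E (n - 1) (n - k)) :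
    ∀ n : ℕ, ∀ k : ℕ, ∀ (_hk : k ≤ n + 1),
      E (n + 1) k = Nat.card {σ : Equiv.Perm (Fin (n + 2)) //
        IsDownUp σ ∧ σ ⟨0, by omega⟩ = ⟨k, by omega⟩} := by
  intro n
  induction n with
  | zero =>
    intro k hk
    interval_cases k
    · rw [hb 1 le_rfl]
      exact (lemA 0).symm
    · have hr := hrec 1 1 le_rfl le_rfl le_rfl
      rw [hr, hb 1 le_rfl, h0, Drec 0 1 0 le_rfl le_rfl (by omega), lemA 0, card_one]
  | succ m ih =>
    intro k hk
    induction k with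
    | zero =>
      rw [hb (m + 2) (by omega)]
      exact (lemA (m + 1)).symm
    | succ j ihk =>
      have hr := hrec (m + 2) (j + 1) (by omega) (by omega) (by omega)
      have e1 : j + 1 - 1 = j := by omega
      have e2 : m + 2 - 1 = m + 1 := by omega
      have e3 : m + 2 - (j + 1) = m + 1 - j := by omega
      rw [e1, e2, e3] at hr
      rw [hr, ihk (by omega), ih (m + 1 - j) (by omega)]
      exact (Drec (m + 1) (j + 1) (m + 1 - j) (by omega) (by omega) (by omega)).symm

/-- If `E` satisfies the Entringer recurrence, then for `n ≥ 1` and `0 ≤ k ≤ n`,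
`E(n,k)` counts the down-up alternating permutations of `{1,…,n+1}` whose first
entry is `k+1` (as an element of `Fin (n+1)`, the value `⟨k, _⟩`). -/
theorem entringer_counts_downup (E : ℕ → ℕ → ℕ)
    (h0 : E 0 0 = 1)
    (hb : ∀ n : ℕ, 1 ≤ n → E n 0 = 0)
    (hrec : ∀ n k : ℕ, 1 ≤ n → 1 ≤ k → k ≤ n → E n k = E n (k - 1) + E (n - 1) (n - k)) :
    ∀ n k : ℕ, ∀ (hn : 1 ≤ n) (hk : k ≤ n),
      E n k = Nat.card {σ : Equiv.Perm (Fin (n + 1)) //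
        IsDownUp σ ∧ σ ⟨0, by omega⟩ = ⟨k, by omega⟩} := by
  intro n k hn hk
  obtain ⟨m, rfl⟩ : ∃ m, n = m + 1 := ⟨n - 1, by omega⟩
  exact main_aux E h0 hb hrec m k (by omega)
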